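/- Let G be a finite nilpotent group. Then rank(G) = rank(G/G'), and consequently rank(G^n) = n · rank(G) for all positive integers n. -/

import Mathlib

open Subgroup
open scoped commutatorElement

/-- Minimal length of a word over `X` (positive letters only) representing `g`. -/
noncomputable def wLen {G : Type*} [Group G] (X : Set G) (g : G) : ℕ :=
  sInf {n | ∃ l : List G, (∀ x ∈ l, x ∈ X) ∧ l.length = n ∧ l.prod = g}

/-- Minimal length of a word over `X ∪ X⁻¹` representing `g`. -/
noncomputable def sLen {G : Type*} [Group G] (X : Set G) (g : G) : ℕ :=
  sInf {n | ∃ l : List G, (∀ x ∈ l, x ∈ X ∨ x⁻¹ ∈ X) ∧ l.length = n ∧ l.prod = g}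

/-- Diameter of `G` with respect to `X` (positive words). -/
noncomputable def diamW (G : Type*) [Group G] (X : Set G) : ℕ :=
  sSup (Set.range (wLen X))

/-- Symmetric diameter of `G` with respect to `X`. -/
noncomputable def diamS (G : Type*) [Group G] (X : Set G) : ℕ :=
  sSup (Set.range (sLen X))

/-- Maximum diameter over all generating sets. -/
noncomputable def DW (G : Type*) [Group G] : ℕ :=
  sSup {d | ∃ X : Set G, Subgroup.closure X = ⊤ ∧ d = diamW G X}

/-- Maximum symmetric diameter over all generating sets. -/
noncomputable def DS (G : Type*) [Group G] : ℕ :=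
  sSup {d | ∃ X : Set G, Subgroup.closure X = ⊤ ∧ d = diamS G X}

/-- Minimal size of a generating set of `G`. -/
noncomputable def rk (G : Type*) [Group G] : ℕ :=
  sInf {n | ∃ S : Finset G, S.card = n ∧ Subgroup.closure (S : Set G) = ⊤}

lemma rk_le_card {G : Type*} [Group G] (S : Finset G) (h : Subgroup.closure (S : Set G) = ⊤) :
    rk G ≤ S.card := Nat.sInf_le ⟨S, rfl, h⟩

lemma exists_rk_finset (G : Type*) [Group G] [Finite G] :
    ∃ S : Finset G, S.card = rk G ∧ Subgroup.closure (S : Set G) = ⊤ := by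
  have : Nonempty (Fintype G) := ⟨Fintype.ofFinite G⟩
  obtain ⟨_⟩ := this
  have hne : {n | ∃ S : Finset G, S.card = n ∧ Subgroup.closure (S : Set G) = ⊤}.Nonempty :=
    ⟨(Finset.univ : Finset G).card, Finset.univ, rfl, by simp [Subgroup.closure_univ]⟩
  have := Nat.sInf_mem hne
  obtain ⟨S, hS, hS2⟩ := this
  exact ⟨S, hS, hS2⟩

lemma rk_le_of_surjective {G H : Type*} [Group G] [Group H] [Finite G] (f : G →* H)
    (hf : Function.Surjective f) : rk H ≤ rk G := by
  obtain ⟨S, hcard, hgen⟩ := exists_rk_finset G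
  classical
  refine le_trans (rk_le_card (S.image f) ?_) (hcard ▸ Finset.card_image_le)
  rw [Finset.coe_image, ← MonoidHom.map_closure, hgen]
  exact Subgroup.map_top_of_surjective f hf

lemma rk_eq_zero_of_subsingleton (G : Type*) [Group G] [Subsingleton G] : rk G = 0 := by
  refine Nat.le_zero.mp ?_
  have : Subgroup.closure ((∅ : Finset G) : Set G) = ⊤ := Subsingleton.elim _ _
  simpa using rk_le_card ∅ this


lemma closure_normal_of_conj {G : Type*} [Group G] {s : Set G}
    (h : ∀ x ∈ s, ∀ g : G, g * x * g⁻¹ ∈ s) : (Subgroup.closure s).Normal := by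
  constructor
  intro n hn g
  induction hn using Subgroup.closure_induction with
  | mem x hx => exact subset_closure (h x hx g)
  | one => simpa using one_mem _
  | mul x y _ _ hx hy => simpa [mul_assoc] using
      (by have := mul_mem hx hy; simpa [mul_assoc] using this : g * x * (g⁻¹ * g) * y * g⁻¹ ∈ _)
  | inv x _ hx => simpa [mul_assoc] using inv_mem hx

/-- commutators together with p-th powers -/
def Kp (G : Type*) [Group G] (p : ℕ) : Subgroup G :=
  commutator G ⊔ Subgroup.closure (Set.range fun g : G => g ^ p)


instance Kp_normal (G : Type*) [Group G] (p : ℕ) : (Kp G p).Normal := by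
  have h1 : (commutator G).Normal := inferInstance
  have h2 : (Subgroup.closure (Set.range fun g : G => g ^ p)).Normal := by
    apply closure_normal_of_conj
    rintro _ ⟨x, rfl⟩ g
    exact ⟨g * x * g⁻¹, by rw [← conj_pow]⟩
  exact Subgroup.sup_normal _ _

lemma Kp_mul_comm {G : Type*} [Group G] (p : ℕ) (a b : G ⧸ Kp G p) : a * b = b * a := by
  induction a using QuotientGroup.induction_on
  induction b using QuotientGroup.induction_on
  rename_i a b
  rw [← QuotientGroup.mk_mul, ← QuotientGroup.mk_mul]
  apply QuotientGroup.eq.mpr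
  have : ⁅b⁻¹, a⁻¹⁆ ∈ Kp G p :=
    le_sup_left (α := Subgroup G) (commutator_mem_commutator (mem_top _) (mem_top _))
  convert this using 1
  group

lemma Kp_pow {G : Type*} [Group G] (p : ℕ) (a : G ⧸ Kp G p) : a ^ p = 1 := by
  induction a using QuotientGroup.induction_on
  rename_i a
  rw [← QuotientGroup.mk_pow]
  rw [QuotientGroup.eq_one_iff]
  exact le_sup_right (α := Subgroup G) (subset_closure ⟨a, rfl⟩)

lemma coatom_lemma {G : Type*} [Group G] [Finite G] [Group.IsNilpotent G] {M : Subgroup G}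
    (hM : IsCoatom M) : ∃ q : ℕ, q.Prime ∧ q ∣ Nat.card G ∧ Kp G q ≤ M := by
  have h02 := (isNilpotent_of_finite_tfae (G := G)).out 0 2
  have hnorm : M.Normal := (h02.mp inferInstance) M hM
  set Q := G ⧸ M with hQ
  -- Q is nontrivial
  obtain ⟨g, hg⟩ : ∃ g : G, g ∉ M := by
    by_contra h
    push_neg at h
    exact hM.1 ((Subgroup.eq_top_iff' M).mpr h)
  have hnt : Nontrivial Q := ⟨QuotientGroup.mk g, 1, by
    rw [Ne, QuotientGroup.eq_one_iff]; exact hg⟩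
  have hcard1 : Nat.card Q ≠ 1 := (Finite.one_lt_card).ne'
  set q := (Nat.card Q).minFac with hq
  have hqprime : q.Prime := Nat.minFac_prime hcard1
  haveI : Fact q.Prime := ⟨hqprime⟩
  obtain ⟨x, hx⟩ := exists_prime_orderOf_dvd_card' (G := Q) q (Nat.minFac_dvd _)
  -- zpowers x = ⊤
  have hxtop : Subgroup.zpowers x = ⊤ := by
    set K := Subgroup.comap (QuotientGroup.mk' M) (Subgroup.zpowers x) with hK
    have hMK : M ≤ K := fun m hm => by
      simp only [hK, Subgroup.mem_comap]
      have : QuotientGroup.mk' M m = 1 := (QuotientGroup.eq_one_iff m).mpr hm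
      rw [this]; exact one_mem _
    obtain ⟨y, hy⟩ := QuotientGroup.mk'_surjective M x
    have hyK : y ∈ K := by
      simp only [hK, Subgroup.mem_comap, hy]
      exact Subgroup.mem_zpowers x
    have hyM : y ∉ M := by
      intro hyM
      have : x = 1 := by rw [← hy]; exact (QuotientGroup.eq_one_iff y).mpr hyM
      rw [this, orderOf_one] at hx
      exact hqprime.one_lt.ne' hx.symm
    have hlt : M < K := lt_of_le_of_ne hMK (fun h => hyM (h ▸ hyK))
    have hKtop : K = ⊤ := hM.2 K hlt
    have := Subgroup.map_comap_eq_self_of_surjective (f := QuotientGroup.mk' M)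
      (QuotientGroup.mk'_surjective M) (H := Subgroup.zpowers x)
    rw [← this, hK] at *
    rw [hKtop]
    exact Subgroup.map_top_of_surjective _ (QuotientGroup.mk'_surjective M)
  have hcardQ : Nat.card Q = q := by
    rw [← Subgroup.card_top (G := Q), ← hxtop, Nat.card_zpowers, hx]
  refine ⟨q, hqprime, ?_, ?_⟩
  · rw [Subgroup.card_eq_card_quotient_mul_card_subgroup M, hcardQ]
    exact Dvd.intro _ rfl
  · rw [Kp]
    apply sup_le
    · rw [_root_.commutator_def, Subgroup.commutator_le]
      intro a _ b _
      rw [← QuotientGroup.eq_one_iff (G := G) (N := M)]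
      have : (QuotientGroup.mk' M) ⁅a, b⁆ = ⁅QuotientGroup.mk' M a, QuotientGroup.mk' M b⁆ :=
        map_commutatorElement _ _ _
      rw [show ((⁅a, b⁆ : G) : Q) = (QuotientGroup.mk' M) ⁅a, b⁆ from rfl, this]
      -- commute in Q since Q is cyclic generated by x
      obtain ⟨i, hi⟩ := Subgroup.mem_zpowers_iff.mp (hxtop ▸ Subgroup.mem_top (QuotientGroup.mk' M a))
      obtain ⟨j, hj⟩ := Subgroup.mem_zpowers_iff.mp (hxtop ▸ Subgroup.mem_top (QuotientGroup.mk' M b))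
      rw [← hi, ← hj, commutatorElement_def]
      group
    · rw [Subgroup.closure_le]
      rintro _ ⟨a, rfl⟩
      simp only [SetLike.mem_coe]
      rw [← QuotientGroup.eq_one_iff (G := G) (N := M)]
      rw [QuotientGroup.mk_pow, ← hcardQ]
      exact pow_card_eq_one'

lemma eq_top_of_sup_Kp {G : Type*} [Group G] [Finite G] [Group.IsNilpotent G] {H : Subgroup G}
    (h : ∀ q : ℕ, q.Prime → q ∣ Nat.card G → H ⊔ Kp G q = ⊤) : H = ⊤ := by
  rcases eq_top_or_exists_le_coatom H with h' | ⟨M, hM, hHM⟩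
  · exact h'
  obtain ⟨q, hq, hqdvd, hKq⟩ := coatom_lemma hM
  exact absurd (le_antisymm le_top ((h q hq hqdvd) ▸ sup_le hHM hKq)) hM.1

lemma eq_top_of_sup_commutator {G : Type*} [Group G] [Finite G] [Group.IsNilpotent G]
    {H : Subgroup G} (h : H ⊔ commutator G = ⊤) : H = ⊤ := by
  rcases eq_top_or_exists_le_coatom H with h' | ⟨M, hM, hHM⟩
  · exact h'
  obtain ⟨q, hq, hqdvd, hKq⟩ := coatom_lemma hM
  have hcomm : commutator G ≤ M := le_trans (le_sup_left (b := Subgroup.closure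
    (Set.range fun g : G => g ^ q))) hKq
  exact absurd (le_antisymm le_top (h ▸ sup_le hHM hcomm)) hM.1

/-- lifting generators through a quotient whose kernel is `N`, provided `H ⊔ N = ⊤ → H = ⊤`. -/
lemma rk_le_rk_quotient_of {G : Type*} [Group G] [Finite G] (N : Subgroup G) [N.Normal]
    (hN : ∀ H : Subgroup G, H ⊔ N = ⊤ → H = ⊤) : rk G ≤ rk (G ⧸ N) := by
  classical
  obtain ⟨S, hcard, hgen⟩ := exists_rk_finset (G ⧸ N)
  have hsurj := QuotientGroup.mk'_surjective N
  choose f hf using fun x : G ⧸ N => hsurj x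
  set T := S.image f with hT
  have himg : QuotientGroup.mk' N '' (T : Set G) = (S : Set (G ⧸ N)) := by
    rw [hT, Finset.coe_image, Set.image_image]
    simp [hf]
  have hmap : Subgroup.map (QuotientGroup.mk' N) (Subgroup.closure (T : Set G)) = ⊤ := by
    rw [MonoidHom.map_closure, himg, hgen]
  have hsup : Subgroup.closure (T : Set G) ⊔ N = ⊤ := by
    have := Subgroup.comap_map_eq (f := QuotientGroup.mk' N) (Subgroup.closure (T : Set G))
    rw [hmap, QuotientGroup.ker_mk'] at this
    rw [← this]
    simp [Subgroup.comap_top]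
  calc rk G ≤ T.card := rk_le_card T (hN _ hsup)
    _ ≤ S.card := Finset.card_image_le
    _ = rk (G ⧸ N) := hcard

lemma rk_abelianization {G : Type*} [Group G] [Finite G] [Group.IsNilpotent G] :
    rk G = rk (G ⧸ commutator G) := by
  refine le_antisymm ?_ (rk_le_of_surjective _ (QuotientGroup.mk'_surjective (commutator G)))
  exact rk_le_rk_quotient_of (commutator G) (fun H h => eq_top_of_sup_commutator h)


lemma closure_lift_sup {G : Type*} [Group G] (N : Subgroup G) [N.Normal]
    (S : Finset (G ⧸ N)) (hS : Subgroup.closure (S : Set (G ⧸ N)) = ⊤) :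
    ∃ T : Finset G, T.card ≤ S.card ∧ Subgroup.closure (T : Set G) ⊔ N = ⊤ := by
  classical
  have hsurj := QuotientGroup.mk'_surjective N
  choose f hf using fun x : G ⧸ N => hsurj x
  refine ⟨S.image f, Finset.card_image_le, ?_⟩
  have himg : QuotientGroup.mk' N '' ((S.image f : Finset G) : Set G) = (S : Set (G ⧸ N)) := by
    rw [Finset.coe_image, Set.image_image]
    simp [hf]
  have hmap : Subgroup.map (QuotientGroup.mk' N)
      (Subgroup.closure ((S.image f : Finset G) : Set G)) = ⊤ := by
    rw [MonoidHom.map_closure, himg, hS]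
  have := Subgroup.comap_map_eq (f := QuotientGroup.mk' N)
    (Subgroup.closure ((S.image f : Finset G) : Set G))
  rw [hmap, QuotientGroup.ker_mk'] at this
  rw [← this]
  simp [Subgroup.comap_top]

/-- E1 : any generating set of an "elementary abelian" group has at least log_p card elements -/
lemma card_le_pow_of_gen {W : Type*} [Group W] [Finite W] {p : ℕ} (hp : p.Prime) (hcomm : ∀ a b : W, a * b = b * a)
    (hpow : ∀ x : W, x ^ p = 1) (S : Finset W)
    (hS : Subgroup.closure (S : Set W) = ⊤) : Nat.card W ≤ p ^ S.card := by
  classical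
  letI : CommGroup W := { (inferInstance : Group W) with mul_comm := hcomm }
  haveI : NeZero p := ⟨hp.pos.ne'⟩
  have hmod : ∀ (s : W) (n : ℕ), s ^ (n % p) = s ^ n := by
    intro s n
    conv_rhs => rw [← Nat.div_add_mod n p, pow_add, pow_mul, hpow, one_pow, one_mul]
  set F : ({ x : W // x ∈ S } → ZMod p) → W :=
    fun e => ∏ s : { x : W // x ∈ S }, (s : W) ^ ((e s).val) with hF
  have hFadd : ∀ e f, F (e + f) = F e * F f := by
    intro e f
    rw [hF]
    simp only
    rw [← Finset.prod_mul_distrib]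
    apply Finset.prod_congr rfl
    intro s _
    rw [← pow_add, Pi.add_apply, ZMod.val_add, hmod]
  have hFzero : F 0 = 1 := by
    rw [hF]; simp
  have hFsingle : ∀ (s : W) (hs : s ∈ S), F (Pi.single ⟨s, hs⟩ 1) = s := by
    intro s hs
    rw [hF]
    simp only
    rw [Finset.prod_eq_single (⟨s, hs⟩ : { x : W // x ∈ S })]
    · simp [ZMod.val_one_eq_one_mod, hmod, hp.one_lt]
    · intro t _ hts
      rw [Pi.single_eq_of_ne hts]
      simp
    · intro h
      exact absurd (Finset.mem_univ _) h
  have hsurj : Function.Surjective F := by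
    intro w
    have hw : w ∈ Subgroup.closure (S : Set W) := hS ▸ Subgroup.mem_top w
    induction hw using Subgroup.closure_induction with
    | mem s hs => exact ⟨Pi.single ⟨s, hs⟩ 1, hFsingle s hs⟩
    | one => exact ⟨0, hFzero⟩
    | mul a b _ _ ha hb =>
        obtain ⟨e, he⟩ := ha
        obtain ⟨f, hf⟩ := hb
        exact ⟨e + f, by rw [hFadd, he, hf]⟩
    | inv a _ ha =>
        obtain ⟨e, he⟩ := ha
        refine ⟨-e, ?_⟩
        have : F (-e) * F e = 1 := by rw [← hFadd, neg_add_cancel, hFzero]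
        rw [he] at this
        exact eq_inv_of_mul_eq_one_left this
  calc Nat.card W ≤ Nat.card ({ x : W // x ∈ S } → ZMod p) := Nat.card_le_card_of_surjective F hsurj
    _ = p ^ S.card := by
        rw [Nat.card_pi]
        simp [Nat.card_zmod, Finset.prod_const, Fintype.card_coe]

universe u

lemma exists_gen_pow_le_card_aux (k : ℕ) : ∀ (W : Type u) [Group W] [Finite W] (p : ℕ),
    p.Prime → (∀ a b : W, a * b = b * a) → (∀ x : W, x ^ p = 1) → Nat.card W ≤ k →
    ∃ S : Finset W, Subgroup.closure (S : Set W) = ⊤ ∧ p ^ S.card ≤ Nat.card W := by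
  induction k with
  | zero => intro W _ _ p _ _ _ hcard; exact absurd (Nat.card_pos.trans_le hcard) (lt_irrefl 0)
  | succ k ih =>
    intro W _ _ p hp hcomm hpow hcard
    classical
    rcases subsingleton_or_nontrivial W with hsub | hnt
    · refine ⟨∅, Subsingleton.elim _ _, ?_⟩
      simp only [Finset.card_empty, pow_zero]; exact Nat.card_pos
    · obtain ⟨x, hx⟩ := exists_ne (1 : W)
      set N := Subgroup.zpowers x with hN
      haveI : N.Normal := by
        constructor
        intro n hn g
        have : g * n * g⁻¹ = n := by rw [hcomm g n, mul_inv_cancel_right]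
        rwa [this]
      have hcardN : Nat.card N = p := by
        rw [hN, Nat.card_zpowers]
        rcases hp.eq_one_or_self_of_dvd _ (orderOf_dvd_of_pow_eq_one (hpow x)) with h | h
        · exact absurd (orderOf_eq_one_iff.mp h) hx
        · exact h
      set Q := W ⧸ N with hQ
      have hcardW : Nat.card W = Nat.card Q * p := by
        rw [← hcardN]; exact Subgroup.card_eq_card_quotient_mul_card_subgroup N
      have hQlt : Nat.card Q < Nat.card W := by
        have h1 : 0 < Nat.card Q := Nat.card_pos
        have := hp.one_lt
        rw [hcardW]; nlinarith
      have hQcomm : ∀ a b : Q, a * b = b * a := by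
        intro a b
        induction a using QuotientGroup.induction_on
        induction b using QuotientGroup.induction_on
        rename_i a b
        rw [← QuotientGroup.mk_mul, ← QuotientGroup.mk_mul, hcomm]
      have hQpow : ∀ a : Q, a ^ p = 1 := by
        intro a
        induction a using QuotientGroup.induction_on
        rename_i a
        rw [← QuotientGroup.mk_pow, hpow]
        rfl
      obtain ⟨S', hS'gen, hS'card⟩ := ih Q p hp hQcomm hQpow (by omega)
      obtain ⟨T, hTcard, hTsup⟩ := closure_lift_sup N S' hS'gen
      refine ⟨insert x T, ?_, ?_⟩
      · refine le_antisymm le_top ?_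
        rw [← hTsup]
        apply sup_le
        · exact Subgroup.closure_mono (by simp [Finset.coe_insert, Set.subset_insert])
        · rw [hN]
          rw [Subgroup.zpowers_le]
          exact Subgroup.subset_closure (by simp)
      · calc p ^ (insert x T).card ≤ p ^ (T.card + 1) :=
              Nat.pow_le_pow_right hp.pos (Finset.card_insert_le x T)
          _ ≤ p ^ (S'.card + 1) := Nat.pow_le_pow_right hp.pos (by omega)
          _ = p ^ S'.card * p := by rw [pow_succ]
          _ ≤ Nat.card Q * p := Nat.mul_le_mul_right p hS'card
          _ = Nat.card W := hcardW.symm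

lemma exists_gen_pow_le_card {W : Type u} [Group W] [Finite W] {p : ℕ} (hp : p.Prime)
    (hcomm : ∀ a b : W, a * b = b * a) (hpow : ∀ x : W, x ^ p = 1) :
    ∃ S : Finset W, Subgroup.closure (S : Set W) = ⊤ ∧ p ^ S.card ≤ Nat.card W :=
  exists_gen_pow_le_card_aux (Nat.card W) W p hp hcomm hpow le_rfl


lemma pow_emod_helper {W : Type*} [Group W] {p : ℕ} (hpow : ∀ x : W, x ^ p = 1)
    (a : W) (n : ℕ) : a ^ n = a ^ (n % p) := by
  conv_lhs => rw [← Nat.div_add_mod n p, pow_add, pow_mul, hpow, one_pow, one_mul]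

lemma rk_le_D {G : Type*} [Group G] [Finite G] [Group.IsNilpotent G] (D : ℕ)
    (hb : ∀ q : ℕ, q.Prime → q ∣ Nat.card G →
      ∃ b : Fin D → G ⧸ Kp G q, Subgroup.closure (Set.range b) = ⊤) :
    rk G ≤ D := by
  classical
  set P := (Nat.card G).primeFactors with hP
  -- the simultaneous reduction homomorphism
  set φ : G →* ∀ q : {x // x ∈ P}, G ⧸ Kp G q.val :=
    { toFun := fun g q => QuotientGroup.mk g
      map_one' := rfl
      map_mul' := fun a b => rfl } with hφ
  -- φ is surjective (CRT)
  have hsingle : ∀ (q : {x // x ∈ P}) (w : G ⧸ Kp G q.val), Pi.mulSingle q w ∈ φ.range := by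
    intro q w
    have hqprime : q.val.Prime := Nat.prime_of_mem_primeFactors q.2
    set c := ∏ r ∈ P.erase q.val, r with hc
    have hcop : Nat.Coprime c q.val := by
      apply Nat.Coprime.prod_left
      intro r hr
      have hrP := Finset.mem_of_mem_erase hr
      have hrq : r ≠ q.val := Finset.ne_of_mem_erase hr
      exact (Nat.coprime_primes (Nat.prime_of_mem_primeFactors hrP) hqprime).mpr hrq
    obtain ⟨u, -, hu⟩ := Nat.exists_mul_mod_eq_one_of_coprime hcop hqprime.one_lt
    set m := c * u with hm
    obtain ⟨g, hg⟩ := QuotientGroup.mk_surjective (s := Kp G q.val) w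
    refine ⟨g ^ m, ?_⟩
    funext r
    have : φ (g ^ m) r = (QuotientGroup.mk g : G ⧸ Kp G r.val) ^ m := by
      rw [map_pow]; rfl
    rw [this]
    by_cases hrq : r = q
    · subst hrq
      rw [Pi.mulSingle_eq_same, pow_emod_helper (Kp_pow r.val), hm, hu, pow_one, hg]
    · rw [Pi.mulSingle_eq_of_ne hrq]
      have hrdvd : r.val ∣ m := by
        rw [hm]
        exact Dvd.dvd.mul_right
          (Finset.dvd_prod_of_mem _ (Finset.mem_erase.mpr ⟨fun h => hrq (Subtype.ext h), r.2⟩)) u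
      obtain ⟨t, ht⟩ := hrdvd
      rw [ht, pow_mul, Kp_pow r.val, one_pow]
  have hφsurj : Function.Surjective φ := by
    have : (⊤ : Subgroup (∀ q : {x // x ∈ P}, G ⧸ Kp G q.val)) ≤ φ.range := by
      intro w _
      rw [← Finset.noncommProd_mulSingle w]
      exact Submonoid.noncommProd_mem _ _ _ _ fun q _ => hsingle q (w q)
    rw [← MonoidHom.range_eq_top]
    exact le_antisymm le_top this
  -- choose the generators
  have hbP : ∀ q : {x // x ∈ P}, ∃ b : Fin D → G ⧸ Kp G q.val,
      Subgroup.closure (Set.range b) = ⊤ := fun q =>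
    hb q.val (Nat.prime_of_mem_primeFactors q.2) (Nat.dvd_of_mem_primeFactors q.2)
  choose b hbgen using hbP
  have hgex : ∀ j : Fin D, ∃ g : G, φ g = fun q => b q j := fun j => hφsurj _
  choose g hg using hgex
  have hgq : ∀ (q : {x // x ∈ P}) (j : Fin D), (QuotientGroup.mk (g j) : G ⧸ Kp G q.val) = b q j :=
    fun q j => congrFun (hg j) q
  set T := Finset.image g Finset.univ with hT
  have hgen : Subgroup.closure (T : Set G) = ⊤ := by
    apply eq_top_of_sup_Kp
    intro q hqprime hqdvd
    have hqP : q ∈ P := Nat.mem_primeFactors.mpr ⟨hqprime, hqdvd, Nat.card_ne_zero.mpr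
      ⟨inferInstance, inferInstance⟩⟩
    have hmap : Subgroup.map (QuotientGroup.mk' (Kp G q)) (Subgroup.closure (T : Set G)) = ⊤ := by
      rw [MonoidHom.map_closure]
      have : QuotientGroup.mk' (Kp G q) '' (T : Set G) = Set.range (b ⟨q, hqP⟩) := by
        rw [hT, Finset.coe_image, Finset.coe_univ, Set.image_univ, ← Set.range_comp]
        exact congrArg Set.range (funext fun j => hgq ⟨q, hqP⟩ j)
      rw [this, hbgen]
    have := Subgroup.comap_map_eq (f := QuotientGroup.mk' (Kp G q)) (Subgroup.closure (T : Set G))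
    rw [hmap, QuotientGroup.ker_mk'] at this
    rw [← this]
    simp [Subgroup.comap_top]
  calc rk G ≤ T.card := rk_le_card T hgen
    _ ≤ D := le_trans Finset.card_image_le (by simp)

lemma rk_pi_le {G : Type*} [Group G] [Finite G] (n : ℕ) : rk (Fin n → G) ≤ n * rk G := by
  classical
  obtain ⟨S, hcard, hgen⟩ := exists_rk_finset G
  set T : Finset (Fin n → G) :=
    Finset.image (fun p : Fin n × {x // x ∈ S} => Pi.mulSingle p.1 (p.2 : G)) Finset.univ with hT
  have hTgen : Subgroup.closure (T : Set (Fin n → G)) = ⊤ := by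
    refine le_antisymm le_top ?_
    intro f _
    have hsingle : ∀ (i : Fin n) (x : G), Pi.mulSingle i x ∈ Subgroup.closure (T : Set (Fin n → G)) := by
      intro i x
      have hx : x ∈ Subgroup.closure (S : Set G) := hgen ▸ Subgroup.mem_top x
      have hle : Subgroup.closure (S : Set G) ≤
          Subgroup.comap (MonoidHom.mulSingle (fun _ : Fin n => G) i)
            (Subgroup.closure (T : Set (Fin n → G))) := by
        rw [Subgroup.closure_le]
        intro s hs
        simp only [SetLike.mem_coe, Subgroup.mem_comap]
        apply Subgroup.subset_closure
        rw [hT]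
        simp only [Finset.coe_image, Finset.coe_univ, Set.image_univ, Set.mem_range]
        exact ⟨(i, ⟨s, hs⟩), rfl⟩
      exact hle hx
    rw [← Finset.noncommProd_mulSingle f]
    exact Submonoid.noncommProd_mem _ _ _ _ fun i _ => hsingle i (f i)
  calc rk (Fin n → G) ≤ T.card := rk_le_card T hTgen
    _ ≤ (Finset.univ : Finset (Fin n × {x // x ∈ S})).card := Finset.card_image_le
    _ = n * rk G := by
        rw [Finset.card_univ, Fintype.card_prod, Fintype.card_fin, Fintype.card_coe, hcard]

lemma pi_mk_surjective {G : Type*} [Group G] (N : Subgroup G) [N.Normal] (n : ℕ) :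
    ∃ ψ : (Fin n → G) →* (Fin n → G ⧸ N), Function.Surjective ψ := by
  refine ⟨{ toFun := fun f i => QuotientGroup.mk (f i)
            map_one' := rfl
            map_mul' := fun a b => rfl }, ?_⟩
  intro w
  have : ∀ i, ∃ x : G, QuotientGroup.mk x = w i := fun i => QuotientGroup.mk_surjective (w i)
  choose f hf using this
  exact ⟨f, funext hf⟩

lemma pad_gen {W : Type*} [Group W] (S : Finset W) (hS : Subgroup.closure (S : Set W) = ⊤)
    (D : ℕ) (h : S.card ≤ D) : ∃ b : Fin D → W, Subgroup.closure (Set.range b) = ⊤ := by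
  classical
  refine ⟨fun j => S.toList.getD j 1, ?_⟩
  refine le_antisymm le_top ?_
  rw [← hS, Subgroup.closure_le]
  intro s hs
  apply Subgroup.subset_closure
  obtain ⟨i, hi, hget⟩ := List.mem_iff_getElem.mp (Finset.mem_toList.mpr hs)
  have hi' : i < S.card := by rwa [Finset.length_toList] at hi
  have hiD : i < D := lt_of_lt_of_le hi' h
  refine ⟨⟨i, hiD⟩, ?_⟩
  simp only
  rw [List.getD_eq_getElem _ _ hi]
  exact hget


theorem stmt5 {G : Type*} [Group G] [Fintype G] [Group.IsNilpotent G] :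
    rk G = rk (G ⧸ commutator G) ∧
      ∀ n : ℕ, 0 < n → rk (Fin n → G) = n * rk G := by
  constructor
  · exact rk_abelianization
  · intro n hn
    refine le_antisymm (rk_pi_le n) ?_
    rcases subsingleton_or_nontrivial G with hsub | hnt
    · have h1 : rk G = 0 := rk_eq_zero_of_subsingleton G
      have h2 : Subsingleton (Fin n → G) := ⟨fun a b => funext fun i => Subsingleton.elim _ _⟩
      rw [h1, mul_zero]
      exact Nat.zero_le _
    · classical
      set P := (Nat.card G).primeFactors with hP
      have hs : ∀ q : {x // x ∈ P}, ∃ S : Finset (G ⧸ Kp G q.val),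
          Subgroup.closure (S : Set (G ⧸ Kp G q.val)) = ⊤ ∧
            q.val ^ S.card ≤ Nat.card (G ⧸ Kp G q.val) := fun q =>
        exists_gen_pow_le_card (Nat.prime_of_mem_primeFactors q.2)
          (Kp_mul_comm q.val) (Kp_pow q.val)
      choose s hsgen hscard using hs
      set D := Finset.univ.sup (fun q : {x // x ∈ P} => (s q).card) with hD
      have hrkD : rk G ≤ D := by
        apply rk_le_D
        intro q hq hqd
        have hqP : q ∈ P := Nat.mem_primeFactors.mpr
          ⟨hq, hqd, Nat.card_ne_zero.mpr ⟨inferInstance, inferInstance⟩⟩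
        exact pad_gen (s ⟨q, hqP⟩) (hsgen ⟨q, hqP⟩) D (Finset.le_sup (f := fun q : {x // x ∈ P} => (s q).card) (Finset.mem_univ _))
      have hPne : P.Nonempty := Nat.nonempty_primeFactors.mpr Finite.one_lt_card
      haveI : Nonempty {x // x ∈ P} := ⟨⟨hPne.choose, hPne.choose_spec⟩⟩
      obtain ⟨qs, _, hqs⟩ := Finset.exists_mem_eq_sup Finset.univ Finset.univ_nonempty
        (fun q : {x // x ∈ P} => (s q).card)
      have hqsprime : qs.val.Prime := Nat.prime_of_mem_primeFactors qs.2
      have hWcard : qs.val ^ D ≤ Nat.card (G ⧸ Kp G qs.val) := by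
        rw [hD, hqs]; exact hscard qs
      obtain ⟨T, hTcard, hTgen⟩ := exists_rk_finset (Fin n → G ⧸ Kp G qs.val)
      have hcomm' : ∀ a b : Fin n → G ⧸ Kp G qs.val, a * b = b * a :=
        fun a b => funext fun i => Kp_mul_comm qs.val (a i) (b i)
      have hpow' : ∀ a : Fin n → G ⧸ Kp G qs.val, a ^ qs.val = 1 :=
        fun a => funext fun i => Kp_pow qs.val (a i)
      have hE1 : Nat.card (Fin n → G ⧸ Kp G qs.val) ≤ qs.val ^ T.card :=
        card_le_pow_of_gen hqsprime hcomm' hpow' T hTgen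
      have hcardpi : Nat.card (Fin n → G ⧸ Kp G qs.val) = Nat.card (G ⧸ Kp G qs.val) ^ n := by
        rw [Nat.card_pi, Finset.prod_const, Finset.card_univ, Fintype.card_fin]
      have hchain : qs.val ^ (n * D) ≤ qs.val ^ T.card := by
        calc qs.val ^ (n * D) = (qs.val ^ D) ^ n := by rw [mul_comm n D, pow_mul]
          _ ≤ Nat.card (G ⧸ Kp G qs.val) ^ n := Nat.pow_le_pow_left hWcard n
          _ = Nat.card (Fin n → G ⧸ Kp G qs.val) := hcardpi.symm
          _ ≤ qs.val ^ T.card := hE1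
      have hnD : n * D ≤ T.card := (Nat.pow_le_pow_iff_right hqsprime.one_lt).mp hchain
      obtain ⟨ψ, hψ⟩ := pi_mk_surjective (Kp G qs.val) n
      calc n * rk G ≤ n * D := Nat.mul_le_mul_left n hrkD
        _ ≤ T.card := hnD
        _ = rk (Fin n → G ⧸ Kp G qs.val) := hTcard
        _ ≤ rk (Fin n → G) := rk_le_of_surjective ψ hψ
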